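/- Let Σ ∈ ℝ^{p×p} be symmetric and S ⊆ {1,…,p} nonempty with S ≠ {1,…,p}. The following are equivalent: (i) for every β ∈ ℝ^p with β ≠ 0 and β_k = 0 for all k ∉ S, one has max_{k∉S} |(Σβ)_k| < max_{j∈S} |(Σβ)_j|; (ii) the principal submatrix Σ_{SS} is invertible and ‖Σ_{S^cS}·Σ_{SS}^{-1}‖_∞ < 1, where ‖·‖_∞ denotes the ℓ_∞→ℓ_∞ operator norm (the maximum absolute row sum). -/
import Mathlib


open Matrix BigOperators

noncomputable section

private lemma real_mul_sign' (x : ℝ) : x * Real.sign x = |x| := by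
  rcases lt_trichotomy x 0 with h | h | h
  · rw [Real.sign_of_neg h, abs_of_neg h]; ring
  · simp [h]
  · rw [Real.sign_of_pos h, abs_of_pos h]; ring

private lemma abs_real_sign_le_one (x : ℝ) : |Real.sign x| ≤ 1 := by
  rcases lt_trichotomy x 0 with h | h | h
  · rw [Real.sign_of_neg h]; norm_num
  · simp [h]
  · rw [Real.sign_of_pos h]; norm_num

private lemma mulVec_restrict {p : ℕ} (Sig : Matrix (Fin p) (Fin p) ℝ) (S : Finset (Fin p))
    (β : Fin p → ℝ) (hsupp : ∀ k ∉ S, β k = 0) (i : Fin p) :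
    Sig.mulVec β i = ∑ j : {x // x ∈ S}, Sig i j * β j := by
  rw [Finset.sum_coe_sort S (fun j => Sig i j * β j)]
  rw [Matrix.mulVec, dotProduct]
  exact (Finset.sum_subset S.subset_univ (fun j _ hj => by rw [hsupp j hj, mul_zero])).symm

/-- Lemma: the max-max-∞ truthfulness condition is equivalent to the Lasso incoherence
condition `Σ_{SS}` invertible and `‖Σ_{S^c S} Σ_{SS}⁻¹‖_∞ < 1` (maximum absolute row sum). -/
theorem maxmax_truthfulness_iff_lasso_incoherence {p : ℕ}
    (Sig : Matrix (Fin p) (Fin p) ℝ) (S : Finset (Fin p))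
    (hSym : Sig.IsSymm) (hS : S.Nonempty) (hne : S ≠ Finset.univ) :
    (∀ β : Fin p → ℝ, β ≠ 0 → (∀ k ∉ S, β k = 0) →
        ∀ k ∉ S, |Sig.mulVec β k| < S.sup' hS fun j => |Sig.mulVec β j|) ↔
      (IsUnit (Sig.submatrix ((↑) : {x // x ∈ S} → Fin p) ((↑) : {x // x ∈ S} → Fin p)) ∧
        ∀ k : {x // x ∉ S}, ∑ j : {x // x ∈ S},
          |(Sig.submatrix ((↑) : {x // x ∉ S} → Fin p) ((↑) : {x // x ∈ S} → Fin p) *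
            (Sig.submatrix ((↑) : {x // x ∈ S} → Fin p)
              ((↑) : {x // x ∈ S} → Fin p))⁻¹) k j| < 1) := by
  classical
  obtain ⟨k0, hk0⟩ : ∃ k, k ∉ S := by
    by_contra h; push_neg at h; exact hne (Finset.eq_univ_iff_forall.mpr h)
  set A := Sig.submatrix ((↑) : {x // x ∈ S} → Fin p) ((↑) : {x // x ∈ S} → Fin p) with hAdef
  set B := Sig.submatrix ((↑) : {x // x ∉ S} → Fin p) ((↑) : {x // x ∈ S} → Fin p) with hBdef
  -- key computations
  have hAval : ∀ (β : Fin p → ℝ), (∀ k ∉ S, β k = 0) → ∀ (j : Fin p) (hj : j ∈ S),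
      Sig.mulVec β j = A.mulVec (fun j' : {x // x ∈ S} => β j') ⟨j, hj⟩ := by
    intro β hsupp j hj
    rw [mulVec_restrict Sig S β hsupp j]
    simp [hAdef, Matrix.mulVec, dotProduct]
  have hBval : ∀ (β : Fin p → ℝ), (∀ k ∉ S, β k = 0) → ∀ (k : Fin p) (hk : k ∉ S),
      Sig.mulVec β k = B.mulVec (fun j' : {x // x ∈ S} => β j') ⟨k, hk⟩ := by
    intro β hsupp k hk
    rw [mulVec_restrict Sig S β hsupp k]
    simp [hBdef, Matrix.mulVec, dotProduct]
  constructor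
  · intro h
    have hdet : A.det ≠ 0 := by
      intro hdet
      obtain ⟨v, hv, hAv⟩ := Matrix.exists_mulVec_eq_zero_iff.mpr hdet
      set β : Fin p → ℝ := fun j => if hj : j ∈ S then v ⟨j, hj⟩ else 0 with hβ
      have hsupp : ∀ k ∉ S, β k = 0 := fun k hk => dif_neg hk
      have hres : (fun j' : {x // x ∈ S} => β j') = v := by
        funext j'; simp [hβ, j'.2]
      have hβne : β ≠ 0 := by
        intro h0
        apply hv
        rw [← hres, h0]; rfl
      have hlt := h β hβne hsupp k0 hk0
      have hsup : (S.sup' hS fun j => |Sig.mulVec β j|) ≤ 0 := by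
        apply Finset.sup'_le
        intro j hj
        rw [hAval β hsupp j hj, hres, hAv]
        simp
      exact absurd (hlt.trans_le hsup) (not_lt.mpr (abs_nonneg _))
    have hAunit : IsUnit A := (Matrix.isUnit_iff_isUnit_det A).mpr (isUnit_iff_ne_zero.mpr hdet)
    refine ⟨hAunit, ?_⟩
    intro k
    set M := B * A⁻¹ with hM
    by_cases hy0 : (fun j : {x // x ∈ S} => Real.sign (M k j)) = 0
    · have hz : ∀ j : {x // x ∈ S}, M k j = 0 := by
        intro j
        have := congrFun hy0 j
        exact Real.sign_eq_zero_iff.mp this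
      calc ∑ j : {x // x ∈ S}, |M k j| = 0 := by simp [hz]
        _ < 1 := one_pos
    · set y : {x // x ∈ S} → ℝ := fun j => Real.sign (M k j) with hydef
      set x := A⁻¹.mulVec y with hx
      have hAx : A.mulVec x = y := by
        rw [hx, Matrix.mulVec_mulVec, Matrix.mul_nonsing_inv A (isUnit_iff_ne_zero.mpr hdet), Matrix.one_mulVec]
      have hxne : x ≠ 0 := by
        intro h0; apply hy0
        rw [← hAx, h0, Matrix.mulVec_zero]
      set β : Fin p → ℝ := fun j => if hj : j ∈ S then x ⟨j, hj⟩ else 0 with hβ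
      have hsupp : ∀ k ∉ S, β k = 0 := fun k hk => dif_neg hk
      have hres : (fun j' : {x // x ∈ S} => β j') = x := by
        funext j'; simp [hβ, j'.2]
      have hβne : β ≠ 0 := by
        intro h0; apply hxne; rw [← hres, h0]; rfl
      have hlt := h β hβne hsupp k.1 k.2
      have hKval : Sig.mulVec β k.1 = ∑ j : {x // x ∈ S}, |M k j| := by
        rw [hBval β hsupp k.1 k.2, hres, hx, Matrix.mulVec_mulVec]
        have : (⟨k.1, k.2⟩ : {x // x ∉ S}) = k := rfl
        rw [this, ← hM]
        simp only [Matrix.mulVec, dotProduct]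
        exact Finset.sum_congr rfl fun j _ => real_mul_sign' (M k j)
      have hsup1 : (S.sup' hS fun j => |Sig.mulVec β j|) ≤ 1 := by
        apply Finset.sup'_le
        intro j hj
        rw [hAval β hsupp j hj, hres, hAx]
        exact abs_real_sign_le_one _
      calc ∑ j : {x // x ∈ S}, |M k j| = Sig.mulVec β k.1 := hKval.symm
        _ ≤ |Sig.mulVec β k.1| := le_abs_self _
        _ < S.sup' hS fun j => |Sig.mulVec β j| := hlt
        _ ≤ 1 := hsup1
  · rintro ⟨hAunit, hrows⟩ β hβne hsupp k hk
    have hdet : A.det ≠ 0 :=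
      isUnit_iff_ne_zero.mp ((Matrix.isUnit_iff_isUnit_det A).mp hAunit)
    set x : {x // x ∈ S} → ℝ := fun j => β j with hx
    have hxne : x ≠ 0 := by
      intro h0; apply hβne; funext j
      by_cases hj : j ∈ S
      · exact congrFun h0 ⟨j, hj⟩
      · exact hsupp j hj
    set y := A.mulVec x with hy
    have hyne : y ≠ 0 := by
      intro h0
      exact hdet (Matrix.exists_mulVec_eq_zero_iff.mp ⟨x, hxne, h0⟩)
    have hxinv : x = A⁻¹.mulVec y := by
      rw [hy, Matrix.mulVec_mulVec, Matrix.nonsing_inv_mul A (isUnit_iff_ne_zero.mpr hdet), Matrix.one_mulVec]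
    have hSval : ∀ (j : Fin p) (hj : j ∈ S), Sig.mulVec β j = y ⟨j, hj⟩ := by
      intro j hj
      rw [hAval β hsupp j hj]
    obtain ⟨j0, hj0⟩ : ∃ j0, y j0 ≠ 0 := Function.ne_iff.mp hyne
    set m := S.sup' hS fun j => |Sig.mulVec β j| with hm
    have hyle : ∀ j : {x // x ∈ S}, |y j| ≤ m := by
      intro j
      have h1 : |Sig.mulVec β j.1| ≤ S.sup' hS fun i => |Sig.mulVec β i| :=
        Finset.le_sup' (fun i => |Sig.mulVec β i|) j.2
      rw [hSval j.1 j.2] at h1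
      exact h1
    have hmpos : 0 < m := by
      calc 0 < |y j0| := abs_pos.mpr hj0
        _ ≤ m := hyle j0
    set k' : {x // x ∉ S} := ⟨k, hk⟩ with hk'
    set M := B * A⁻¹ with hM
    have hKval : Sig.mulVec β k = ∑ j : {x // x ∈ S}, M k' j * y j := by
      rw [hBval β hsupp k hk]
      have : (fun j' : {x // x ∈ S} => β j') = x := rfl
      rw [this, hxinv, Matrix.mulVec_mulVec, ← hM]
      rfl
    calc |Sig.mulVec β k| = |∑ j : {x // x ∈ S}, M k' j * y j| := by rw [hKval]
      _ ≤ ∑ j : {x // x ∈ S}, |M k' j * y j| := Finset.abs_sum_le_sum_abs _ _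
      _ = ∑ j : {x // x ∈ S}, |M k' j| * |y j| := by
          exact Finset.sum_congr rfl fun j _ => abs_mul _ _
      _ ≤ ∑ j : {x // x ∈ S}, |M k' j| * m := by
          refine Finset.sum_le_sum fun j _ => ?_
          exact mul_le_mul_of_nonneg_left (hyle j) (abs_nonneg _)
      _ = (∑ j : {x // x ∈ S}, |M k' j|) * m := (Finset.sum_mul _ _ _).symm
      _ < 1 * m := mul_lt_mul_of_pos_right (hrows k') hmpos
      _ = m := one_mul m
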